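/- Evaluations of the eigenvalue formula: with λ(n,ℓ) = 1 − (1/(2κ(1−κ))) ∫_{1−2κ}^{1} s^{2n+ℓ+1} P_ℓ((1−2κ+s²)/((2−2κ)s)) ds, one has: (i) λ(0,1) = κ; (ii) λ(1,0) = 2κ(1−κ); and (iii) for every integer n ≥ 0, λ(n,0) = 1 − (1/(n+1)) · (1−ν^{2n+2})/(1−ν²), where ν = 1−2κ. -/

import Mathlib

open MeasureTheory Real

noncomputable section

/-- The `ℓ`-th Legendre polynomial, via Rodrigues' formula
`P_ℓ(x) = (1/(2^ℓ ℓ!)) (d/dx)^ℓ (x²-1)^ℓ`. -/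
noncomputable def legendreP (l : ℕ) : Polynomial ℝ :=
  ((2 ^ l * l.factorial : ℝ)⁻¹) • (Polynomial.derivative^[l] ((Polynomial.X ^ 2 - 1) ^ l))

/-- The eigenvalues `λ(n,ℓ)` of the linear Maxwell-molecules collision operator:
`λ(n,ℓ) = 1 - (1/(2κ(1-κ))) ∫_{1-2κ}^1 s^(2n+ℓ+1) P_ℓ((1-2κ+s²)/((2-2κ)s)) ds`. -/
noncomputable def lamEV (κ : ℝ) (n l : ℕ) : ℝ :=
  1 - (1 / (2 * κ * (1 - κ))) *
    ∫ s in (1 - 2 * κ)..1,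
      s ^ (2 * n + l + 1) * (legendreP l).eval ((1 - 2 * κ + s ^ 2) / ((2 - 2 * κ) * s))

lemma legendreP_zero : legendreP 0 = 1 := by simp [legendreP]

lemma legendreP_one : legendreP 1 = Polynomial.X := by
  simp [legendreP, Polynomial.smul_eq_C_mul]
  rw [← mul_assoc, one_add_one_eq_two, ← map_ofNat Polynomial.C 2, ← Polynomial.C_mul]
  norm_num

/-- Evaluations of the eigenvalue formula:
`λ(0,1) = κ`, `λ(1,0) = 2κ(1-κ)` and `λ(n,0) = 1 - (1/(n+1))(1-ν^(2n+2))/(1-ν²)`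
with `ν = 1-2κ`. -/
theorem lamEV_evaluations (κ : ℝ) (hκ : κ ∈ Set.Ioo (0 : ℝ) 1) (ν : ℝ) (hν : ν = 1 - 2 * κ) :
    lamEV κ 0 1 = κ ∧ lamEV κ 1 0 = 2 * κ * (1 - κ) ∧
      ∀ n : ℕ, lamEV κ n 0 =
        1 - (1 / (n + 1 : ℝ)) * (1 - ν ^ (2 * n + 2)) / (1 - ν ^ 2) := by
  have h0 : κ ≠ 0 := ne_of_gt hκ.1
  have h1 : (1:ℝ) - κ ≠ 0 := sub_ne_zero.mpr (ne_of_gt hκ.2)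
  have hc : (2:ℝ) - 2*κ ≠ 0 := by
    have := hκ.2; intro h; nlinarith
  have hzero : ∀ n : ℕ, lamEV κ n 0 =
      1 - (1 / (n + 1 : ℝ)) * (1 - ν ^ (2 * n + 2)) / (1 - ν ^ 2) := by
    intro n
    subst hν
    have hn : ((n:ℝ) + 1) ≠ 0 := by positivity
    rw [lamEV, legendreP_zero]
    simp only [Polynomial.eval_one, mul_one, Nat.add_zero, integral_pow]
    have hden : (1:ℝ) - (1-2*κ)^2 = 4*κ*(1-κ) := by ring
    rw [hden]
    push_cast
    field_simp
    ring
  refine ⟨?_, ?_, hzero⟩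
  · -- λ(0,1) = κ
    have key : ∀ s : ℝ, s ^ (2*0+1+1) * (legendreP 1).eval ((1-2*κ+s^2)/((2-2*κ)*s))
        = (2-2*κ)⁻¹ * ((1-2*κ)*s + s^3) := by
      intro s
      rw [legendreP_one, Polynomial.eval_X]
      rcases eq_or_ne s 0 with rfl|hs
      · simp
      · field_simp
    rw [lamEV]
    simp only [key]
    rw [intervalIntegral.integral_const_mul,
      intervalIntegral.integral_add
        (by apply Continuous.intervalIntegrable; fun_prop)
        (by apply Continuous.intervalIntegrable; fun_prop),
      intervalIntegral.integral_const_mul, integral_id, integral_pow]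
    push_cast
    field_simp
    ring
  · -- λ(1,0) = 2κ(1-κ)
    rw [hzero 1]
    subst hν
    have hden : (1:ℝ) - (1-2*κ)^2 = 4*κ*(1-κ) := by ring
    have hd : (1:ℝ) - (1-2*κ)^2 ≠ 0 := by rw [hden]; positivity
    field_simp
    ring
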